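/- Let D be a weakly connected digraph and let 𝔅 be a class of dibonds of D. Then a pair (F, ℬ) is a (nested) 𝔅-optimal pair for D if and only if it is a (nested) 𝔅-optimal pair for the quotient digraph D/≡_𝔅, obtained from D by identifying the vertices in each ≡_𝔅-equivalence class and deleting the resulting loops. -/

import Mathlib

/-- A digraph with vertex type `V` and edge type `E`, allowing parallel edges. -/
structure MultiDigraph (V : Type*) (E : Type*) where
  tail : E → V
  head : E → V

namespace MultiDigraph

variable {V : Type*} {E : Type*} (D : MultiDigraph V E)

/-- Adjacency in the underlying undirected multigraph. -/
def Adj (u v : V) : Prop :=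
  ∃ e : E, (D.tail e = u ∧ D.head e = v) ∨ (D.tail e = v ∧ D.head e = u)

/-- The underlying undirected multigraph is connected. -/
def WeaklyConnected : Prop :=
  ∀ u v : V, Relation.ReflTransGen D.Adj u v

/-- `B` is the dicut of `D` whose in-shore is `X` (every edge of the cut has its
head in `X`, and no edge leaves `X`). -/
def DicutWith (X : Set V) (B : Set E) : Prop :=
  (∀ e : E, D.tail e ∈ X → D.head e ∈ X) ∧
    B = {e : E | D.tail e ∉ X ∧ D.head e ∈ X}

/-- `B` is a dicut of `D`. -/
def IsDicut (B : Set E) : Prop :=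
  ∃ X : Set V, D.DicutWith X B

/-- A dibond is a minimal non-empty dicut. -/
def IsDibond (B : Set E) : Prop :=
  D.IsDicut B ∧ B.Nonempty ∧
    ∀ B' : Set E, D.IsDicut B' → B'.Nonempty → B' ⊆ B → B' = B

/-- A dijoin meets every non-empty dicut. -/
def Dijoin (F : Set E) : Prop :=
  ∀ B : Set E, D.IsDicut B → B.Nonempty → (F ∩ B).Nonempty

/-- A finitary dijoin meets every non-empty finite dicut. -/
def FinitaryDijoin (F : Set E) : Prop :=
  ∀ B : Set E, D.IsDicut B → B.Finite → B.Nonempty → (F ∩ B).Nonempty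

/-- Two dicuts are nested if they have witnessing sides one of which is
`⊆`-comparable with a side of the other. -/
def NestedDicuts (B₁ B₂ : Set E) : Prop :=
  ∃ X₁ X₂ : Set V, D.DicutWith X₁ B₁ ∧ D.DicutWith X₂ B₂ ∧
    (X₁ ⊆ X₂ ∨ X₂ ⊆ X₁ ∨ X₁ ⊆ X₂ᶜ ∨ X₂ᶜ ⊆ X₁)

/-- An optimal pair: a set `ℬ` of pairwise disjoint finite dicuts and a finitary
dijoin `F ⊆ ⋃ ℬ` meeting each member of `ℬ` in exactly one edge. -/
def OptimalPair (F : Set E) (ℬ : Set (Set E)) : Prop :=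
  (∀ B ∈ ℬ, D.IsDicut B ∧ B.Finite) ∧
    ℬ.Pairwise Disjoint ∧
    D.FinitaryDijoin F ∧
    F ⊆ ⋃₀ ℬ ∧
    ∀ B ∈ ℬ, (F ∩ B).ncard = 1

/-- A nested optimal pair. -/
def NestedOptimalPair (F : Set E) (ℬ : Set (Set E)) : Prop :=
  D.OptimalPair F ℬ ∧ ℬ.Pairwise D.NestedDicuts

/-- The underlying multigraph contains no ray. -/
def Rayless : Prop :=
  ¬ ∃ f : ℕ → V, Function.Injective f ∧ ∀ n : ℕ, D.Adj (f n) (f (n + 1))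

/-- The (undirected) cut of `D` with side `X`: all edges with exactly one
endpoint in `X`. -/
def cutEdges (X : Set V) : Set E :=
  {e : E | (D.tail e ∈ X ∧ D.head e ∉ X) ∨ (D.tail e ∉ X ∧ D.head e ∈ X)}

/-- Any two distinct vertices are separated by a finite cut. -/
def FinitelySeparable : Prop :=
  ∀ v w : V, v ≠ w → ∃ X : Set V, (D.cutEdges X).Finite ∧ v ∈ X ∧ w ∉ X

/-- Any two distinct vertices lie on different sides of some finite dicut. -/
def FinitelyDiseparable : Prop :=
  ∀ v w : V, v ≠ w → ∃ (X : Set V) (B : Set E), D.DicutWith X B ∧ B.Finite ∧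
    ((v ∈ X ∧ w ∉ X) ∨ (v ∉ X ∧ w ∈ X))

/-- The underlying multigraph is 2-connected: it is connected and deleting any
single vertex keeps it connected. -/
def UnderlyingTwoConnected : Prop :=
  D.WeaklyConnected ∧ ∀ x u v : V, u ≠ x → v ≠ x →
    Relation.ReflTransGen (fun a b => a ≠ x ∧ b ≠ x ∧ D.Adj a b) u v

/-- `v ∼ w`: no finite dicut of `D` separates `v` and `w`. -/
def Sim (v w : V) : Prop :=
  ∀ (X : Set V) (B : Set E), D.DicutWith X B → B.Finite → (v ∈ X ↔ w ∈ X)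

/-- `W` is a witness for `v ∼ w`: it meets every finite cut separating `v`
and `w` in both directions. -/
def Witness (v w : V) (W : Set E) : Prop :=
  ∀ X : Set V, (D.cutEdges X).Finite → v ∈ X → w ∉ X →
    (∃ e ∈ W, D.tail e ∈ X ∧ D.head e ∉ X) ∧
    (∃ e ∈ W, D.tail e ∉ X ∧ D.head e ∈ X)

end MultiDigraph

namespace MultiDigraph

variable {V : Type*} {E : Type*} (D : MultiDigraph V E)

/-- `v ≡_𝔅 w`: no cut in `𝔅` separates `v` and `w`. -/
def SepEquiv (𝔅 : Set (Set E)) (v w : V) : Prop :=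
  ∀ B ∈ 𝔅, ∀ X : Set V, D.DicutWith X B → (v ∈ X ↔ w ∈ X)

/-- `≡_𝔅` as a setoid on `V`. -/
def sepSetoid (𝔅 : Set (Set E)) : Setoid V where
  r := D.SepEquiv 𝔅
  iseqv := ⟨fun _ _ _ _ _ => Iff.rfl,
    fun h B hB X hX => (h B hB X hX).symm,
    fun h₁ h₂ B hB X hX => (h₁ B hB X hX).trans (h₂ B hB X hX)⟩

/-- The edges of the quotient `D/≡_𝔅`: the edges of `D` whose endpoints are
not `≡_𝔅`-equivalent (all loops arising from the identification are
deleted). -/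
def SepEdge (𝔅 : Set (Set E)) : Type _ :=
  {e : E // ¬ D.SepEquiv 𝔅 (D.tail e) (D.head e)}

/-- The quotient digraph `D/≡_𝔅`. -/
def quotientBySep (𝔅 : Set (Set E)) :
    MultiDigraph (Quotient (D.sepSetoid 𝔅)) (D.SepEdge 𝔅) where
  tail e := Quotient.mk (D.sepSetoid 𝔅) (D.tail e.1)
  head e := Quotient.mk (D.sepSetoid 𝔅) (D.head e.1)

/-- An edge set of `D` regarded as an edge set of `D/≡_𝔅`. -/
def toSepEdges (𝔅 : Set (Set E)) (B : Set E) : Set (D.SepEdge 𝔅) :=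
  {e : D.SepEdge 𝔅 | e.1 ∈ B}

end MultiDigraph

/-- A `𝔅`-optimal pair: `F` is a `𝔅`-dijoin (it meets every dibond in `𝔅`),
`ℬ ⊆ 𝔅` is a set of pairwise disjoint dibonds, `F ⊆ ⋃ ℬ`, and `|F ∩ B| = 1`
for every `B ∈ ℬ`. -/
def BOptimalPair {E : Type*} (𝔅 : Set (Set E)) (F : Set E) (ℬ : Set (Set E)) : Prop :=
  (∀ B ∈ 𝔅, (F ∩ B).Nonempty) ∧ ℬ ⊆ 𝔅 ∧ ℬ.Pairwise Disjoint ∧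
    F ⊆ ⋃₀ ℬ ∧ ∀ B ∈ ℬ, (F ∩ B).ncard = 1


section Aux

namespace MultiDigraph

variable {V : Type*} {E : Type*} (D : MultiDigraph V E) (𝔅 : Set (Set E))

lemma edge_not_sepEquiv (h𝔅 : ∀ B ∈ 𝔅, D.IsDibond B) {B : Set E} (hB : B ∈ 𝔅)
    {e : E} (he : e ∈ B) : ¬ D.SepEquiv 𝔅 (D.tail e) (D.head e) := by
  obtain ⟨X, hX⟩ := (h𝔅 B hB).1
  intro h
  rw [hX.2] at he
  exact he.1 ((h B hB X hX).mpr he.2)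

lemma val_image_toSepEdges (h𝔅 : ∀ B ∈ 𝔅, D.IsDibond B) {B : Set E} (hB : B ∈ 𝔅) :
    Subtype.val '' (D.toSepEdges 𝔅 B) = B := by
  ext e
  constructor
  · rintro ⟨⟨e, hne⟩, he, rfl⟩
    exact he
  · intro he
    exact ⟨⟨e, D.edge_not_sepEquiv 𝔅 h𝔅 hB he⟩, he, rfl⟩

lemma toSepEdges_val_image (A : Set (D.SepEdge 𝔅)) :
    D.toSepEdges 𝔅 (Subtype.val '' A) = A := by
  ext e
  exact Subtype.val_injective.mem_set_image

lemma sep_saturated {B : Set E} (hB : B ∈ 𝔅) {X : Set V} (hX : D.DicutWith X B)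
    {v w : V} (hvw : D.SepEquiv 𝔅 v w) : v ∈ X ↔ w ∈ X :=
  hvw B hB X hX

lemma dicutWith_preimage (A : Set (D.SepEdge 𝔅)) (X' : Set (Quotient (D.sepSetoid 𝔅)))
    (hX' : (D.quotientBySep 𝔅).DicutWith X' A) :
    D.DicutWith (Quotient.mk (D.sepSetoid 𝔅) ⁻¹' X') (Subtype.val '' A) := by
  constructor
  · intro e he
    by_cases hne : D.SepEquiv 𝔅 (D.tail e) (D.head e)
    · have heq : Quotient.mk (D.sepSetoid 𝔅) (D.tail e) = Quotient.mk (D.sepSetoid 𝔅) (D.head e) :=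
        Quotient.sound hne
      show Quotient.mk (D.sepSetoid 𝔅) (D.head e) ∈ X'
      exact heq ▸ he
    · exact hX'.1 ⟨e, hne⟩ he
  · ext e
    constructor
    · rintro ⟨f, hf, rfl⟩
      rw [hX'.2] at hf
      exact hf
    · rintro ⟨ht, hh⟩
      have hne : ¬ D.SepEquiv 𝔅 (D.tail e) (D.head e) := by
        intro h
        have heq : Quotient.mk (D.sepSetoid 𝔅) (D.tail e) = Quotient.mk (D.sepSetoid 𝔅) (D.head e) :=
          Quotient.sound h
        exact ht (show Quotient.mk (D.sepSetoid 𝔅) (D.tail e) ∈ X' from heq ▸ hh)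
      refine ⟨⟨e, hne⟩, ?_, rfl⟩
      rw [hX'.2]
      exact ⟨ht, hh⟩

lemma dicutWith_image {A : Set (D.SepEdge 𝔅)} (hA : Subtype.val '' A ∈ 𝔅)
    {X : Set V} (hX : D.DicutWith X (Subtype.val '' A)) :
    (D.quotientBySep 𝔅).DicutWith (Quotient.mk (D.sepSetoid 𝔅) '' X) A ∧
    (∀ v, Quotient.mk (D.sepSetoid 𝔅) v ∈ Quotient.mk (D.sepSetoid 𝔅) '' X ↔ v ∈ X) := by
  have hsat : ∀ v, Quotient.mk (D.sepSetoid 𝔅) v ∈ Quotient.mk (D.sepSetoid 𝔅) '' X ↔ v ∈ X := by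
    intro v
    constructor
    · rintro ⟨w, hw, hwv⟩
      exact (D.sep_saturated 𝔅 hA hX (Quotient.exact hwv)).mp hw
    · intro hv
      exact ⟨v, hv, rfl⟩
  refine ⟨⟨?_, ?_⟩, hsat⟩
  · rintro ⟨e, hne⟩ he
    have ht : D.tail e ∈ X := (hsat _).mp he
    exact Set.mem_image_of_mem _ (hX.1 e ht)
  · ext ⟨e, hne⟩
    constructor
    · intro hmem
      have hiv : e ∈ Subtype.val '' A := ⟨⟨e, hne⟩, hmem, rfl⟩
      rw [hX.2] at hiv
      exact ⟨fun h => hiv.1 ((hsat _).mp h), (hsat _).mpr hiv.2⟩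
    · rintro ⟨ht, hh⟩
      have hiv : e ∈ Subtype.val '' A := by
        rw [hX.2]
        exact ⟨fun h => ht ((hsat _).mpr h), (hsat _).mp hh⟩
      exact Subtype.val_injective.mem_set_image.mp hiv

lemma nested_iff {ℬ : Set (Set (D.SepEdge 𝔅))}
    (hmem : ∀ A ∈ ℬ, Subtype.val '' A ∈ 𝔅) :
    ((Set.image Subtype.val) '' ℬ).Pairwise D.NestedDicuts ↔
      ℬ.Pairwise (D.quotientBySep 𝔅).NestedDicuts := by
  have inj : Function.Injective (Subtype.val : D.SepEdge 𝔅 → E) := Subtype.val_injective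
  constructor
  · intro h A₁ hA₁ A₂ hA₂ hne
    obtain ⟨X₁, X₂, h1, h2, hcomp⟩ :=
      h (Set.mem_image_of_mem _ hA₁) (Set.mem_image_of_mem _ hA₂)
        (fun hc => hne (Set.image_injective.mpr inj hc))
    obtain ⟨q1, hs1⟩ := D.dicutWith_image 𝔅 (hmem A₁ hA₁) h1
    obtain ⟨q2, hs2⟩ := D.dicutWith_image 𝔅 (hmem A₂ hA₂) h2
    refine ⟨_, _, q1, q2, ?_⟩
    rcases hcomp with hc | hc | hc | hc
    · exact Or.inl (Set.image_mono hc)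
    · exact Or.inr (Or.inl (Set.image_mono hc))
    · refine Or.inr (Or.inr (Or.inl ?_))
      rintro q ⟨v, hv, rfl⟩ hq2
      exact hc hv ((hs2 v).mp hq2)
    · refine Or.inr (Or.inr (Or.inr ?_))
      intro q hq
      obtain ⟨v, rfl⟩ := Quotient.exists_rep q
      have hv2 : v ∉ X₂ := fun hv => hq ((hs2 v).mpr hv)
      exact ⟨v, hc hv2, rfl⟩
  · intro h B₁ hB₁ B₂ hB₂ hne
    obtain ⟨A₁, hA₁, rfl⟩ := hB₁
    obtain ⟨A₂, hA₂, rfl⟩ := hB₂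
    have hA12 : A₁ ≠ A₂ := fun hc => hne (by rw [hc])
    obtain ⟨X₁, X₂, h1, h2, hcomp⟩ := h hA₁ hA₂ hA12
    refine ⟨_, _, D.dicutWith_preimage 𝔅 A₁ X₁ h1, D.dicutWith_preimage 𝔅 A₂ X₂ h2, ?_⟩
    rcases hcomp with hc | hc | hc | hc
    · exact Or.inl (Set.preimage_mono hc)
    · exact Or.inr (Or.inl (Set.preimage_mono hc))
    · refine Or.inr (Or.inr (Or.inl ?_))
      rw [← Set.preimage_compl]
      exact Set.preimage_mono hc
    · refine Or.inr (Or.inr (Or.inr ?_))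
      rw [← Set.preimage_compl]
      exact Set.preimage_mono hc

lemma bopt_iff (h𝔅 : ∀ B ∈ 𝔅, D.IsDibond B) (F : Set (D.SepEdge 𝔅))
    (ℬ : Set (Set (D.SepEdge 𝔅))) :
    BOptimalPair 𝔅 (Subtype.val '' F) ((Set.image Subtype.val) '' ℬ) ↔
      BOptimalPair (D.toSepEdges 𝔅 '' 𝔅) F ℬ := by
  have inj : Function.Injective (Subtype.val : D.SepEdge 𝔅 → E) := Subtype.val_injective
  have key : ∀ A : Set (D.SepEdge 𝔅),
      Subtype.val '' F ∩ Subtype.val '' A = Subtype.val '' (F ∩ A) :=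
    fun A => (Set.image_inter inj).symm
  constructor
  · rintro ⟨c1, c2, c3, c4, c5⟩
    refine ⟨?_, ?_, ?_, ?_, ?_⟩
    · rintro A ⟨B, hB, rfl⟩
      obtain ⟨x, hxF, hxB⟩ := c1 B hB
      obtain ⟨e, heF, rfl⟩ := hxF
      exact ⟨e, heF, hxB⟩
    · intro A hA
      exact ⟨Subtype.val '' A, c2 (Set.mem_image_of_mem _ hA), D.toSepEdges_val_image 𝔅 A⟩
    · intro A₁ hA₁ A₂ hA₂ hne
      have hd := c3 (Set.mem_image_of_mem _ hA₁) (Set.mem_image_of_mem _ hA₂)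
        (fun hc => hne (Set.image_injective.mpr inj hc))
      exact (Set.disjoint_image_iff inj).mp hd
    · intro e heF
      have hm : e.1 ∈ ⋃₀ ((Set.image Subtype.val) '' ℬ) := c4 (Set.mem_image_of_mem _ heF)
      obtain ⟨S, ⟨A, hA, rfl⟩, heS⟩ := hm
      obtain ⟨f, hfA, hfe⟩ := heS
      exact ⟨A, hA, inj hfe ▸ hfA⟩
    · intro A hA
      have hc := c5 _ (Set.mem_image_of_mem _ hA)
      rwa [key, Set.ncard_image_of_injective _ inj] at hc
  · rintro ⟨c1, c2, c3, c4, c5⟩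
    refine ⟨?_, ?_, ?_, ?_, ?_⟩
    · intro B hB
      obtain ⟨e, heF, heB⟩ := c1 _ ⟨B, hB, rfl⟩
      exact ⟨e.1, ⟨e, heF, rfl⟩, heB⟩
    · rintro _ ⟨A, hA, rfl⟩
      obtain ⟨B, hB, rfl⟩ := c2 hA
      rw [D.val_image_toSepEdges 𝔅 h𝔅 hB]
      exact hB
    · rintro _ ⟨A₁, h1, rfl⟩ _ ⟨A₂, h2, rfl⟩ hne
      exact (Set.disjoint_image_iff inj).mpr (c3 h1 h2 (fun hc => hne (by rw [hc])))
    · rintro _ ⟨e, heF, rfl⟩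
      obtain ⟨A, hA, heA⟩ := c4 heF
      exact ⟨Subtype.val '' A, ⟨A, hA, rfl⟩, ⟨e, heA, rfl⟩⟩
    · rintro _ ⟨A, hA, rfl⟩
      exact (congrArg Set.ncard (key A)).trans ((Set.ncard_image_of_injective _ inj).trans (c5 A hA))

end MultiDigraph

end Aux

/-- Let `𝔅` be a class of dibonds of a weakly connected digraph `D`. A pair
`(F, ℬ)` (of quotient edge sets, equivalently edge sets of `D` avoiding the
contracted loops) is a (nested) `𝔅`-optimal pair for `D` if and only if it is
a (nested) `𝔅`-optimal pair for the quotient digraph `D/≡_𝔅`. -/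
theorem bOptimalPair_iff_quotient {V E : Type*}
    (D : MultiDigraph V E) (hD : D.WeaklyConnected)
    (𝔅 : Set (Set E)) (h𝔅 : ∀ B ∈ 𝔅, D.IsDibond B)
    (F : Set (D.SepEdge 𝔅)) (ℬ : Set (Set (D.SepEdge 𝔅))) :
    (BOptimalPair 𝔅 (Subtype.val '' F) ((Set.image Subtype.val) '' ℬ) ↔
      BOptimalPair (D.toSepEdges 𝔅 '' 𝔅) F ℬ) ∧
    ((BOptimalPair 𝔅 (Subtype.val '' F) ((Set.image Subtype.val) '' ℬ) ∧
        ((Set.image Subtype.val) '' ℬ).Pairwise D.NestedDicuts) ↔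
      (BOptimalPair (D.toSepEdges 𝔅 '' 𝔅) F ℬ ∧
        ℬ.Pairwise (D.quotientBySep 𝔅).NestedDicuts)) := by
  have main := D.bopt_iff 𝔅 h𝔅 F ℬ
  refine ⟨main, ?_⟩
  constructor
  · rintro ⟨hopt, hnest⟩
    have hmem : ∀ A ∈ ℬ, Subtype.val '' A ∈ 𝔅 :=
      fun A hA => hopt.2.1 (Set.mem_image_of_mem _ hA)
    exact ⟨main.mp hopt, (D.nested_iff 𝔅 hmem).mp hnest⟩
  · rintro ⟨hopt, hnest⟩
    have hopt' := main.mpr hopt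
    have hmem : ∀ A ∈ ℬ, Subtype.val '' A ∈ 𝔅 :=
      fun A hA => hopt'.2.1 (Set.mem_image_of_mem _ hA)
    exact ⟨hopt', (D.nested_iff 𝔅 hmem).mpr hnest⟩
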